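/- Let f, g ≥ 0 be integrable functions on the unit circle with log f, log g ∈ L¹, and let f⁺, g⁺ be their outer spectral factors normalized positive at 0 (so |f⁺|² = f, |g⁺|² = g a.e.). Then ‖f⁺ − g⁺‖²_{H²} = ‖(f^{1/2} − g^{1/2})²‖_{L¹} + 2∫_{-π}^{π} f^{1/2} (g^{1/2} − f^{1/2}) (1 − cos((1/2)(log f − log g)~)) dθ + 2∫_{-π}^{π} f (1 − cos((1/2)(log f − log g)~)) dθ. -/

import Mathlib

open MeasureTheory Set

lemma norm_sub_exp (a b x y : ℝ) :
    ‖(a:ℂ) * Complex.exp (Complex.I * (x:ℂ) / 2) - (b:ℂ) * Complex.exp (Complex.I * (y:ℂ) / 2)‖ ^ 2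
      = a ^ 2 + b ^ 2 - 2 * a * b * Real.cos ((x - y) / 2) := by
  have hx : Complex.I * (x:ℂ) / 2 = ((x/2 : ℝ):ℂ) * Complex.I := by push_cast; ring
  have hy : Complex.I * (y:ℂ) / 2 = ((y/2 : ℝ):ℂ) * Complex.I := by push_cast; ring
  rw [hx, hy, Complex.exp_mul_I, Complex.exp_mul_I, ← Complex.ofReal_cos,
    ← Complex.ofReal_sin, ← Complex.ofReal_cos, ← Complex.ofReal_sin,
    Complex.sq_norm, Complex.normSq_apply]
  simp only [Complex.sub_re, Complex.sub_im, Complex.mul_re, Complex.mul_im,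
    Complex.add_re, Complex.add_im, Complex.ofReal_re, Complex.ofReal_im,
    Complex.I_re, Complex.I_im]
  have h1 : (x - y)/2 = x/2 - y/2 := by ring
  rw [h1, Real.cos_sub]
  nlinarith [Real.sin_sq_add_cos_sq (x/2), Real.sin_sq_add_cos_sq (y/2)]

/-- Exact `H²` identity for the difference of spectral factors. Here `F, G` are
the boundary values of the outer spectral factors `f⁺, g⁺`, i.e.
`F = √f exp((i/2)(log f)~)` and `G = √g exp((i/2)(log g)~)`, with `A = (log f)~`
and `B = (log g)~` the harmonic conjugates (so `(log f − log g)~ = A − B`).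
Then `‖f⁺ − g⁺‖²_{H²} = ‖(√f − √g)²‖_{L¹}
  + 2∫ √f(√g − √f)(1 − cos(½(log f − log g)~))
  + 2∫ f(1 − cos(½(log f − log g)~))`. -/
theorem stmt9 (f g : ℝ → ℝ)
    (hf0 : ∀ θ, 0 ≤ f θ) (hg0 : ∀ θ, 0 ≤ g θ)
    (hf : IntegrableOn f (Ico (-Real.pi) Real.pi))
    (hg : IntegrableOn g (Ico (-Real.pi) Real.pi))
    (hlogf : IntegrableOn (fun θ => Real.log (f θ)) (Ico (-Real.pi) Real.pi))
    (hlogg : IntegrableOn (fun θ => Real.log (g θ)) (Ico (-Real.pi) Real.pi))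
    (A B : ℝ → ℝ) (hA : Measurable A) (hB : Measurable B)
    (F G : ℝ → ℂ)
    (hF : ∀ θ, F θ = (Real.sqrt (f θ) : ℂ) * Complex.exp (Complex.I * (A θ : ℂ) / 2))
    (hG : ∀ θ, G θ = (Real.sqrt (g θ) : ℂ) * Complex.exp (Complex.I * (B θ : ℂ) / 2)) :
    ∫ θ in Ico (-Real.pi) Real.pi, ‖F θ - G θ‖ ^ 2 =
      (∫ θ in Ico (-Real.pi) Real.pi, (Real.sqrt (f θ) - Real.sqrt (g θ)) ^ 2) +
      2 * (∫ θ in Ico (-Real.pi) Real.pi,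
        Real.sqrt (f θ) * (Real.sqrt (g θ) - Real.sqrt (f θ)) *
          (1 - Real.cos ((A θ - B θ) / 2))) +
      2 * ∫ θ in Ico (-Real.pi) Real.pi,
        f θ * (1 - Real.cos ((A θ - B θ) / 2)) := by
  set μ := volume.restrict (Ico (-Real.pi) Real.pi) with hμ
  have mf : AEMeasurable f μ := hf.aemeasurable
  have mg : AEMeasurable g μ := hg.aemeasurable
  have msf : AEMeasurable (fun θ => Real.sqrt (f θ)) μ :=
    Real.continuous_sqrt.measurable.comp_aemeasurable mf
  have msg : AEMeasurable (fun θ => Real.sqrt (g θ)) μ :=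
    Real.continuous_sqrt.measurable.comp_aemeasurable mg
  have mc : Measurable (fun θ => 1 - Real.cos ((A θ - B θ) / 2)) :=
    measurable_const.sub (((hA.sub hB).div_const 2).cos)
  have hc0 : ∀ θ, 0 ≤ 1 - Real.cos ((A θ - B θ) / 2) := fun θ => by
    nlinarith [Real.cos_le_one ((A θ - B θ) / 2)]
  have hc2 : ∀ θ, 1 - Real.cos ((A θ - B θ) / 2) ≤ 2 := fun θ => by
    nlinarith [Real.neg_one_le_cos ((A θ - B θ) / 2)]
  -- integrability of √f√g
  have hsfg : Integrable (fun θ => Real.sqrt (f θ) * Real.sqrt (g θ)) μ := by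
    refine Integrable.mono' ((hf.add hg).div_const 2) (msf.mul msg).aestronglyMeasurable
      (Filter.Eventually.of_forall fun θ => ?_)
    have h1 := Real.sq_sqrt (hf0 θ)
    have h2 := Real.sq_sqrt (hg0 θ)
    have h3 := sq_nonneg (Real.sqrt (f θ) - Real.sqrt (g θ))
    rw [Real.norm_eq_abs, abs_of_nonneg (mul_nonneg (Real.sqrt_nonneg _) (Real.sqrt_nonneg _))]
    simp only [Pi.add_apply]
    nlinarith
  -- integrability of the three integrands
  have h1 : Integrable (fun θ => (Real.sqrt (f θ) - Real.sqrt (g θ)) ^ 2) μ := by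
    have : (fun θ => (Real.sqrt (f θ) - Real.sqrt (g θ)) ^ 2)
        = fun θ => f θ + g θ - 2 * (Real.sqrt (f θ) * Real.sqrt (g θ)) := by
      funext θ
      have h1 := Real.sq_sqrt (hf0 θ)
      have h2 := Real.sq_sqrt (hg0 θ)
      nlinarith
    rw [this]
    exact (hf.add hg).sub (hsfg.const_mul 2)
  have h2 : Integrable (fun θ => Real.sqrt (f θ) * (Real.sqrt (g θ) - Real.sqrt (f θ)) *
      (1 - Real.cos ((A θ - B θ) / 2))) μ := by
    refine Integrable.mono' ((hsfg.add hf).const_mul 2)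
      (((msf.mul (msg.sub msf)).mul mc.aemeasurable).aestronglyMeasurable)
      (Filter.Eventually.of_forall fun θ => ?_)
    have h1 := Real.sq_sqrt (hf0 θ)
    have hsf := Real.sqrt_nonneg (f θ)
    have hsg := Real.sqrt_nonneg (g θ)
    rw [Real.norm_eq_abs, abs_mul, abs_mul]
    rw [abs_of_nonneg hsf, abs_of_nonneg (hc0 θ)]
    have habs : |Real.sqrt (g θ) - Real.sqrt (f θ)| ≤ Real.sqrt (g θ) + Real.sqrt (f θ) := by
      rw [abs_sub_le_iff]; constructor <;> nlinarith
    calc Real.sqrt (f θ) * |Real.sqrt (g θ) - Real.sqrt (f θ)| * (1 - Real.cos ((A θ - B θ) / 2))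
        ≤ Real.sqrt (f θ) * (Real.sqrt (g θ) + Real.sqrt (f θ)) * 2 := by
          have := hc2 θ
          have := hc0 θ
          have hnn : 0 ≤ Real.sqrt (f θ) * |Real.sqrt (g θ) - Real.sqrt (f θ)| :=
            mul_nonneg hsf (abs_nonneg _)
          nlinarith [mul_nonneg hsf hsg]
      _ = 2 * ((fun θ => Real.sqrt (f θ) * Real.sqrt (g θ)) θ + f θ) := by
          simp only []; nlinarith
  have h3 : Integrable (fun θ => f θ * (1 - Real.cos ((A θ - B θ) / 2))) μ := by
    refine Integrable.mono' (hf.const_mul 2)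
      ((mf.mul mc.aemeasurable).aestronglyMeasurable)
      (Filter.Eventually.of_forall fun θ => ?_)
    rw [Real.norm_eq_abs, abs_mul, abs_of_nonneg (hf0 θ), abs_of_nonneg (hc0 θ)]
    have := hc2 θ
    have := hf0 θ
    nlinarith
  -- pointwise identity
  have key : ∀ θ, ‖F θ - G θ‖ ^ 2 = (Real.sqrt (f θ) - Real.sqrt (g θ)) ^ 2
      + 2 * (Real.sqrt (f θ) * (Real.sqrt (g θ) - Real.sqrt (f θ)) *
          (1 - Real.cos ((A θ - B θ) / 2)))
      + 2 * (f θ * (1 - Real.cos ((A θ - B θ) / 2))) := by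
    intro θ
    rw [hF θ, hG θ, norm_sub_exp]
    have h1 := Real.sq_sqrt (hf0 θ)
    linear_combination (2 * (1 - Real.cos ((A θ - B θ) / 2))) * h1
  calc ∫ θ in Ico (-Real.pi) Real.pi, ‖F θ - G θ‖ ^ 2
      = ∫ θ in Ico (-Real.pi) Real.pi, ((Real.sqrt (f θ) - Real.sqrt (g θ)) ^ 2
        + 2 * (Real.sqrt (f θ) * (Real.sqrt (g θ) - Real.sqrt (f θ)) *
            (1 - Real.cos ((A θ - B θ) / 2)))
        + 2 * (f θ * (1 - Real.cos ((A θ - B θ) / 2)))) := by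
        exact integral_congr_ae (Filter.Eventually.of_forall fun θ => key θ)
    _ = _ := by
        have h2' : Integrable (fun θ => 2 * (Real.sqrt (f θ) * (Real.sqrt (g θ) - Real.sqrt (f θ)) *
            (1 - Real.cos ((A θ - B θ) / 2)))) μ := h2.const_mul 2
        have h3' : Integrable (fun θ => 2 * (f θ * (1 - Real.cos ((A θ - B θ) / 2)))) μ :=
          h3.const_mul 2
        have h12 : Integrable (fun θ => (Real.sqrt (f θ) - Real.sqrt (g θ)) ^ 2
            + 2 * (Real.sqrt (f θ) * (Real.sqrt (g θ) - Real.sqrt (f θ)) *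
              (1 - Real.cos ((A θ - B θ) / 2)))) μ := h1.add h2'
        rw [integral_add h12 h3', integral_add h1 h2', integral_const_mul, integral_const_mul]
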